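/- Let n be prime and let x_1, ..., x_n be positive reals, not all equal. Let i be the unique index such that the forward string SA(i) = x_i...x_n x_1...x_{i-1} is a Lyndon word, and let j be the unique index such that the backward string x_{j-1}...x_1 x_n...x_j is a Lyndon word. Then the set LWS of starting robots determined by these two strings has exactly two elements (i.e., the two distinguished robots are distinct). -/

import Mathlib

def IsLyndon (w : List ℝ) : Prop :=
  w ≠ [] ∧ ∀ j, 0 < j → j < w.length → List.Lex (· < ·) w (w.rotate j)

/-- Lex (<) is asymmetric on lists of reals. -/
lemma lex_asymm : ∀ {a b : List ℝ}, List.Lex (· < ·) a b → List.Lex (· < ·) b a → False := by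
  intro a b h1
  induction h1 with
  | nil => intro h2; cases h2
  | @rel a l₁ b l₂ hab =>
      intro h2
      cases h2 with
      | rel hba => exact absurd hba (not_lt.2 hab.le)
      | cons h => exact absurd hab (lt_irrefl _)
  | @cons a l₁ l₂ h ih =>
      intro h2
      cases h2 with
      | rel hba => exact absurd hba (lt_irrefl _)
      | cons h' => exact ih h'

lemma lex_irrefl (a : List ℝ) : ¬ List.Lex (· < ·) a a := fun h => lex_asymm h h

/-- From Lex on equal-length appended lists, extract Lex or equality of prefixes. -/
lemma lex_append_cancel : ∀ (a b c d : List ℝ), a.length = b.length →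
    List.Lex (· < ·) (a ++ c) (b ++ d) → List.Lex (· < ·) a b ∨ a = b := by
  intro a
  induction a with
  | nil => intro b c d hl _; right; exact (List.length_eq_zero_iff.mp hl.symm).symm
  | cons x t ih =>
      intro b c d hl h
      cases b with
      | nil => simp at hl
      | cons y s =>
          simp only [List.length_cons, Nat.succ.injEq] at hl
          cases h with
          | rel hxy => exact Or.inl (List.Lex.rel hxy)
          | cons h' =>
              rcases ih s c d hl h' with h'' | rfl
              · exact Or.inl (List.Lex.cons h'')
              · exact Or.inr rfl

/-- A Lyndon word of length ≥ 2 has first letter strictly less than its last letter. -/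
lemma lyndon_head_lt_last (a z : ℝ) (s : List ℝ)
    (hw : IsLyndon (a :: (s ++ [z]))) : a < z := by
  obtain ⟨-, hrot⟩ := hw
  have hlen : (a :: (s ++ [z])).length = s.length + 2 := by simp
  have h1 : List.Lex (· < ·) (a :: (s ++ [z])) ((a :: (s ++ [z])).rotate (s.length + 1)) := by
    apply hrot <;> omega
  have h2 : List.Lex (· < ·) (a :: (s ++ [z])) ((a :: (s ++ [z])).rotate 1) := by
    apply hrot <;> omega
  have hr1 : (a :: (s ++ [z])).rotate (s.length + 1) = z :: (a :: s) := by
    have hle : s.length + 1 ≤ (a :: (s ++ [z])).length := by omega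
    rw [List.rotate_eq_drop_append_take hle]
    have hw2 : (a :: (s ++ [z])) = (a :: s) ++ [z] := by simp
    have hlen2 : s.length + 1 = (a :: s).length := by simp
    rw [hw2, hlen2, List.drop_left, List.take_left]
    simp
  have hr2 : (a :: (s ++ [z])).rotate 1 = (s ++ [z]) ++ [a] := by
    simp [List.rotate_cons_succ]
  rw [hr1] at h1
  rw [hr2] at h2
  cases h1 with
  | rel h => exact h
  | cons h =>
      exfalso
      have h2' : List.Lex (· < ·) ((a :: s) ++ [a]) ((s ++ [a]) ++ [a]) := by
        simpa using h2
      have hlen3 : (a :: s).length = (s ++ [a]).length := by simp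
      rcases lex_append_cancel _ _ _ _ hlen3 h2' with h3 | h3
      · exact lex_asymm h3 h
      · rw [h3] at h
        exact lex_irrefl _ h

lemma neg_one_val (n : ℕ) [NeZero n] : ((-1 : Fin n) : ℕ) = n - 1 := by
  obtain ⟨m, rfl⟩ := Nat.exists_eq_succ_of_ne_zero (NeZero.ne n)
  simp [Fin.coe_neg_one]

/-- A Lyndon word of length ≥ 2: first entry < last entry, get version. -/
lemma lyndon_get (w : List ℝ) (hw : IsLyndon w) (h2 : 2 ≤ w.length)
    (h0 : 0 < w.length) (hl : w.length - 1 < w.length) :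
    w.get ⟨0, h0⟩ < w.get ⟨w.length - 1, hl⟩ := by
  obtain ⟨a, t, rfl⟩ := List.exists_cons_of_ne_nil hw.1
  rcases List.eq_nil_or_concat t with rfl | ⟨s, z, rfl⟩
  · simp at h2
  · have hw' : IsLyndon (a :: (s ++ [z])) := by rwa [List.concat_eq_append] at hw
    have hk := lyndon_head_lt_last a z s hw'
    have hget0 : (a :: s.concat z).get ⟨0, h0⟩ = a := rfl
    have hgetl : (a :: s.concat z).get ⟨(a :: s.concat z).length - 1, hl⟩ = z := by
      simp [List.get_eq_getElem, List.concat_eq_append, List.getElem_append_right]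
    rw [hget0, hgetl]
    exact hk

/-- Version for ofFn words. -/
lemma lyndon_ofFn (n : ℕ) [NeZero n] (hn : 2 ≤ n) (f : Fin n → ℝ)
    (h : IsLyndon (List.ofFn f)) : f 0 < f (-1) := by
  have hlen : (List.ofFn f).length = n := by simp
  have h0 : (0 : ℕ) < (List.ofFn f).length := by omega
  have hl : (List.ofFn f).length - 1 < (List.ofFn f).length := by omega
  have key := lyndon_get _ h (by omega) h0 hl
  rw [List.get_ofFn, List.get_ofFn] at key
  have e1 : Fin.cast (List.length_ofFn (f := f)) ⟨0, h0⟩ = (0 : Fin n) := Fin.ext (by simp)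
  have e2 : Fin.cast (List.length_ofFn (f := f)) ⟨(List.ofFn f).length - 1, hl⟩ = (-1 : Fin n) := by
    apply Fin.ext
    simp [neg_one_val, hlen]
  rwa [e1, e2] at key

/-- For n prime and positive reals x_1,...,x_n not all equal, the
robot whose forward string of angles is a Lyndon word and the robot whose
backward string of angles is a Lyndon word are distinct; hence |LWS| = 2. -/
theorem lyndon_forward_backward_distinct (n : ℕ) [NeZero n] (hp : n.Prime)
    (x : Fin n → ℝ) (hpos : ∀ i, 0 < x i)
    (hne : ¬ ∀ i j, x i = x j)
    (i j : Fin n)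
    (hi : IsLyndon (List.ofFn (fun k : Fin n => x (i + k))))
    (hj : IsLyndon (List.ofFn (fun k : Fin n => x (j - 1 - k)))) :
    i ≠ j := by
  intro hij
  subst hij
  have hn : 2 ≤ n := hp.two_le
  have h1 := lyndon_ofFn n hn _ hi
  have h2 := lyndon_ofFn n hn _ hj
  simp only [add_zero, sub_zero, sub_neg_eq_add, sub_add_cancel] at h1 h2
  -- h1 : x i < x (i + (-1)), h2 : x (i - 1) < x i
  have : i + (-1) = i - 1 := (sub_eq_add_neg i 1).symm
  rw [this] at h1
  exact absurd (h1.trans h2) (lt_irrefl _)
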